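/- arXiv:math/0609410 — 3 statements merged into one kernel-verified Lean document; each statement's English description precedes it below -/
import Mathlib

section
/- Let p be an odd prime, K = ℚ(ζ) the p-th cyclotomic field, π the prime above p, and A ∈ O_K a semi-primary number (A ≡ a mod π² for some integer a coprime to p) with σ(A) = A^μ · α^p for the automorphism σ: ζ ↦ ζ^v (v a primitive root mod p), μ coprime to p, α ∈ K. Suppose S = K(ω) where ω^p = A^{p-1}. Then among the p extensions σ_{(w)} of σ to S defined by σ_{(w)}(ω) = ω^μ · α^{p-1} · ζ^w (w = 0,...,p-1), there is exactly one w such that α^{p-1}·ζ^w is semi-primary. -/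
open NumberField

lemma aux_prod_mem_pow {R : Type*} [CommRing R] (I : Ideal R) (f : ℕ → R) (s : Finset ℕ)
    (h : ∀ k ∈ s, f k ∈ I) : ∏ k ∈ s, f k ∈ I ^ s.card := by
  induction s using Finset.cons_induction with
  | empty => simp
  | cons a s ha ih =>
    rw [Finset.prod_cons, Finset.card_cons, pow_succ, mul_comm (I ^ s.card) I]
    exact Ideal.mul_mem_mul (h a (Finset.mem_cons_self a s))
      (ih fun k hk => h k (Finset.mem_cons_of_mem hk))

set_option maxHeartbeats 2000000 in
set_option synthInstance.maxHeartbeats 400000 in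
theorem stmt7 (p : ℕ) [hp : Fact p.Prime] (hodd : Odd p)
    (K : Type*) [Field K] [NumberField K]
    [IsCyclotomicExtension {p} ℚ K]
    (ζ : 𝓞 K) (hζ : IsPrimitiveRoot ζ p)
    (π : Ideal (𝓞 K)) (hπ : π = Ideal.span {ζ - 1})
    (v : ℕ) (hv : orderOf (v : ZMod p) = p - 1)
    (μ : ℕ) (hμ : ¬ p ∣ μ)
    (A α : 𝓞 K)
    (hAsp : ∃ a : ℤ, ¬ (p : ℤ) ∣ a ∧ A - (a : 𝓞 K) ∈ π ^ 2)
    (σ : 𝓞 K ≃+* 𝓞 K) (hσζ : σ ζ = ζ ^ v)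
    (hσA : σ A = A ^ μ * α ^ p)
    (S : Type*) [Field S] [Algebra K S]
    (ω : S) (hω : ω ^ p = algebraMap K S ((A ^ (p - 1) : 𝓞 K) : K)) :
    ∃! w : Fin p, ∃ c : ℤ, ¬ (p : ℤ) ∣ c ∧
      α ^ (p - 1) * ζ ^ (w : ℕ) - (c : 𝓞 K) ∈ π ^ 2 := by
  have hp' : p.Prime := hp.out
  have hp2 : p ≠ 2 := by rintro rfl; revert hodd; decide
  have hp1 : 1 < p := hp'.one_lt
  have hp3 : 3 ≤ p := by have := hp'.two_le; omega
  haveI : NeZero p := ⟨hp'.ne_zero⟩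
  haveI : Fact (Nat.Prime ((⟨p, hp.out.pos⟩ : ℕ+) : ℕ)) := hp
  haveI : Fact (PNat.Prime (⟨p, hp.out.pos⟩ : ℕ+)) := ⟨hp.out⟩
  -- `ζ - 1` is prime, in particular not a unit
  have hinj : Function.Injective (algebraMap (𝓞 K) K) := RingOfIntegers.coe_injective
  have hζK : IsPrimitiveRoot (algebraMap (𝓞 K) K ζ) p :=
    hζ.map_of_injective hinj
  have htoInt : hζK.toInteger = ζ := by
    apply hinj
    exact hζK.coe_toInteger
  have hprime : Prime (ζ - 1) := by
    have := hζK.zeta_sub_one_prime'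
    rwa [htoInt] at this
  have hπtop : π ≠ ⊤ := by
    rw [hπ, Ne, Ideal.span_singleton_eq_top]
    exact hprime.not_unit
  have hmem : ζ - 1 ∈ π := by rw [hπ]; exact Ideal.mem_span_singleton_self _
  have hsq : π ^ 2 = Ideal.span {(ζ - 1) ^ 2} := by rw [hπ, Ideal.span_singleton_pow]
  -- p ∈ π ^ 2
  have hplem : ((p : ℤ) : 𝓞 K) ∈ π ^ 2 := by
    have h1 : IsPrimitiveRoot ζ ((p - 1) + 1) := by
      rwa [Nat.sub_add_cancel hp'.one_le]
    have hpp : ((p : 𝓞 K)) = ∏ k ∈ Finset.range (p - 1), (1 - ζ ^ (k + 1)) := by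
      rw [h1.prod_one_sub_pow_eq_order, ← Nat.cast_add_one, Nat.sub_add_cancel hp'.one_le]
    have hmemprod : ∏ k ∈ Finset.range (p - 1), (1 - ζ ^ (k + 1)) ∈ π ^ (p - 1) := by
      have := aux_prod_mem_pow π (fun k => 1 - ζ ^ (k + 1)) (Finset.range (p - 1)) ?_
      · simpa using this
      · intro k _
        have hdvd : (ζ - 1) ∣ ζ ^ (k + 1) - 1 := by
          simpa using sub_dvd_pow_sub_pow ζ 1 (k + 1)
        have hmem2 : ζ ^ (k + 1) - 1 ∈ π := by
          rw [hπ, Ideal.mem_span_singleton]; exact hdvd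
        simpa using π.neg_mem hmem2
    have hle : π ^ (p - 1) ≤ π ^ 2 := Ideal.pow_le_pow_right (by omega)
    have : ((p : 𝓞 K)) ∈ π ^ 2 := hpp ▸ hle hmemprod
    simpa using this
  have hpmem : ((p : ℤ) : 𝓞 K) ∈ π := Ideal.pow_le_self two_ne_zero hplem
  -- integers in π
  have hint : ∀ m : ℤ, ((m : 𝓞 K) ∈ π ↔ (p : ℤ) ∣ m) := by
    intro m
    constructor
    · intro hm
      by_contra hdvd
      have hcop : IsCoprime (p : ℤ) m :=
        (Nat.prime_iff_prime_int.mp hp').coprime_iff_not_dvd.mpr hdvd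
      obtain ⟨x, y, hab⟩ := hcop
      apply hπtop
      rw [Ideal.eq_top_iff_one]
      have h1 : ((1 : ℤ) : 𝓞 K) ∈ π := by
        rw [← hab]
        push_cast
        exact Ideal.add_mem _ (Ideal.mul_mem_left _ _ (by exact_mod_cast hpmem)) (Ideal.mul_mem_left _ _ hm)
      simpa using h1
    · rintro ⟨k, rfl⟩
      push_cast
      exact Ideal.mul_mem_right _ _ (by exact_mod_cast hpmem : (p : 𝓞 K) ∈ π)
  have hζne1 : ζ - 1 ≠ 0 := sub_ne_zero.mpr (hζ.ne_one hp1)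
  -- F4
  have hF4 : ∀ m : ℤ, ((m : 𝓞 K) * (ζ - 1) ∈ π ^ 2 ↔ (p : ℤ) ∣ m) := by
    intro m
    rw [hsq, Ideal.mem_span_singleton]
    constructor
    · rintro ⟨t, ht⟩
      have hmm : (m : 𝓞 K) = (ζ - 1) * t := by
        apply mul_left_cancel₀ hζne1
        linear_combination ht
      have hmem3 : (m : 𝓞 K) ∈ π := by
        rw [hπ, Ideal.mem_span_singleton]; exact ⟨t, hmm⟩
      exact (hint m).mp hmem3
    · intro hdvd
      have hpd : (ζ - 1) ^ 2 ∣ ((p : ℤ) : 𝓞 K) := by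
        rw [hsq, Ideal.mem_span_singleton] at hplem
        exact hplem
      have h1 : (ζ - 1) ^ 2 ∣ (m : 𝓞 K) := by
        obtain ⟨k, hk⟩ := hdvd
        refine hpd.trans ⟨(k : 𝓞 K), ?_⟩
        rw [hk]; push_cast; ring
      exact h1.mul_right _
  -- F5 : every element is congruent to an integer mod π
  have hF5 : ∀ x : 𝓞 K, ∃ n : ℤ, x - (n : 𝓞 K) ∈ π := by
    have htop : Algebra.adjoin ℤ ({ζ} : Set (𝓞 K)) = ⊤ := by
      have h := hζK.integralPowerBasis.adjoin_gen_eq_top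
      rwa [hζK.integralPowerBasis_gen, htoInt] at h
    intro x
    have hx : x ∈ Algebra.adjoin ℤ ({ζ} : Set (𝓞 K)) := by rw [htop]; trivial
    induction hx using Algebra.adjoin_induction with
    | mem y hy =>
      obtain rfl : y = ζ := hy
      exact ⟨1, by simpa using hmem⟩
    | algebraMap r =>
      exact ⟨r, by rw [eq_intCast]; simpa using π.zero_mem⟩
    | add x y hx hy ihx ihy =>
      obtain ⟨c1, h1⟩ := ihx
      obtain ⟨c2, h2⟩ := ihy
      refine ⟨c1 + c2, ?_⟩
      have heq : x + y - ((c1 + c2 : ℤ) : 𝓞 K) = (x - c1) + (y - c2) := by push_cast; ring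
      rw [heq]; exact Ideal.add_mem _ h1 h2
    | mul x y hx hy ihx ihy =>
      obtain ⟨c1, h1⟩ := ihx
      obtain ⟨c2, h2⟩ := ihy
      refine ⟨c1 * c2, ?_⟩
      have heq : x * y - ((c1 * c2 : ℤ) : 𝓞 K) = x * (y - c2) + (x - c1) * (c2 : 𝓞 K) := by
        push_cast; ring
      rw [heq]
      exact Ideal.add_mem _ (Ideal.mul_mem_left _ _ h2) (Ideal.mul_mem_right _ _ h1)
  -- α is a π-unit
  obtain ⟨a, hpa, hA2⟩ := hAsp
  have hσ2 : σ A - (a : 𝓞 K) ∈ π ^ 2 := by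
    rw [hsq, Ideal.mem_span_singleton] at hA2
    obtain ⟨t₀, ht₀⟩ := hA2
    have hζv : ζ ^ v - 1 ∈ π := by
      rw [hπ, Ideal.mem_span_singleton]
      simpa using sub_dvd_pow_sub_pow ζ 1 v
    have heq : σ A - (a : 𝓞 K) = (ζ ^ v - 1) ^ 2 * σ t₀ := by
      have h := congrArg σ ht₀
      rw [map_sub, map_intCast, map_mul, map_pow, map_sub, map_one, hσζ] at h
      exact h
    rw [heq]
    exact Ideal.mul_mem_right _ _ (by rw [sq, sq]; exact Ideal.mul_mem_mul hζv hζv)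
  have hσAπ : σ A ∉ π := by
    intro h
    apply hpa
    apply (hint a).mp
    have h1 := Ideal.sub_mem π h (Ideal.pow_le_self two_ne_zero hσ2)
    simpa using h1
  have hαπ : α ∉ π := by
    intro h
    apply hσAπ
    rw [hσA]
    have hαp : α ^ p ∈ π := by
      have heq : α ^ p = α * α ^ (p - 1) := by
        rw [← pow_succ']
        congr 1
        omega
      rw [heq]
      exact Ideal.mul_mem_right _ _ h
    exact Ideal.mul_mem_left _ _ hαp
  obtain ⟨c₀, hc₀⟩ := hF5 α
  have hpc₀ : ¬ (p : ℤ) ∣ c₀ := by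
    intro h
    apply hαπ
    have h1 : (c₀ : 𝓞 K) ∈ π := (hint c₀).mpr h
    have h2 := Ideal.add_mem π hc₀ h1
    simpa using h2
  set c : ℤ := c₀ ^ (p - 1) with hc_def
  have hpc : ¬ (p : ℤ) ∣ c := fun h => hpc₀ (Int.Prime.dvd_pow' hp' h)
  have hxc : α ^ (p - 1) - (c : 𝓞 K) ∈ π := by
    rw [hπ, Ideal.mem_span_singleton]
    have h1 : (ζ - 1) ∣ (α - (c₀ : 𝓞 K)) := by
      rwa [hπ, Ideal.mem_span_singleton] at hc₀
    have h2 := h1.trans (sub_dvd_pow_sub_pow α (c₀ : 𝓞 K) (p - 1))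
    have heq : ((c : ℤ) : 𝓞 K) = ((c₀ : 𝓞 K)) ^ (p - 1) := by rw [hc_def]; push_cast; ring
    rwa [heq]
  have hxc' := hxc
  rw [hπ, Ideal.mem_span_singleton] at hxc'
  obtain ⟨d, hd⟩ := hxc'
  obtain ⟨e, he⟩ := hF5 d
  have hxce : α ^ (p - 1) - (c : 𝓞 K) - (e : 𝓞 K) * (ζ - 1) ∈ π ^ 2 := by
    have heq : α ^ (p - 1) - (c : 𝓞 K) - (e : 𝓞 K) * (ζ - 1) = (ζ - 1) * (d - (e : 𝓞 K)) := by
      linear_combination hd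
    rw [heq, sq]
    exact Ideal.mul_mem_mul hmem he
  -- quotient ring computations
  set mk : 𝓞 K →+* (𝓞 K) ⧸ (π ^ 2) := Ideal.Quotient.mk (π ^ 2) with hmk_def
  have ht2 : mk (ζ - 1) * mk (ζ - 1) = 0 := by
    rw [← map_mul]
    exact Ideal.Quotient.eq_zero_iff_mem.mpr (by rw [← sq]; exact Ideal.pow_mem_pow hmem 2)
  have hmkζ : ∀ w : ℕ, mk (ζ ^ w) = 1 + (w : (𝓞 K) ⧸ (π ^ 2)) * mk (ζ - 1) := by
    intro w
    induction w with
    | zero => simp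
    | succ n ih =>
      have hζmk : mk ζ = 1 + mk (ζ - 1) := by rw [map_sub, map_one]; ring
      have hstep : mk (ζ ^ (n + 1)) = mk (ζ ^ n) * mk ζ := by
        rw [← map_mul]; exact congrArg mk (pow_succ ζ n)
      push_cast
      linear_combination hstep + (mk ζ) * ih +
        (1 + (n : (𝓞 K) ⧸ (π ^ 2)) * mk (ζ - 1)) * hζmk + ((n : (𝓞 K) ⧸ (π ^ 2))) * ht2
  have hmkx : mk (α ^ (p - 1)) =
      ((c : ℤ) : (𝓞 K) ⧸ (π ^ 2)) + ((e : ℤ) : (𝓞 K) ⧸ (π ^ 2)) * mk (ζ - 1) := by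
    have h0 := Ideal.Quotient.eq_zero_iff_mem.mpr hxce
    rw [← hmk_def] at h0
    rw [map_sub, map_sub, map_mul, map_intCast, map_intCast, sub_sub, sub_eq_zero] at h0
    exact h0
  have key : ∀ w : ℕ, mk (α ^ (p - 1) * ζ ^ w) =
      ((c : ℤ) : (𝓞 K) ⧸ (π ^ 2)) + ((e + c * w : ℤ) : (𝓞 K) ⧸ (π ^ 2)) * mk (ζ - 1) := by
    intro w
    rw [map_mul, hmkx, hmkζ w]
    push_cast
    linear_combination ((e : (𝓞 K) ⧸ (π ^ 2)) * (w : (𝓞 K) ⧸ (π ^ 2))) * ht2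
  have cond : ∀ w : ℕ,
      ((∃ c' : ℤ, ¬ (p : ℤ) ∣ c' ∧ α ^ (p - 1) * ζ ^ w - (c' : 𝓞 K) ∈ π ^ 2) ↔
        (p : ℤ) ∣ (e + c * w)) := by
    intro w
    constructor
    · rintro ⟨c', hpc', hmem'⟩
      have h1 : mk (α ^ (p - 1) * ζ ^ w) = ((c' : ℤ) : (𝓞 K) ⧸ (π ^ 2)) := by
        have h0 := Ideal.Quotient.eq_zero_iff_mem.mpr hmem'
        rw [← hmk_def] at h0
        rwa [map_sub, map_intCast, sub_eq_zero] at h0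
      rw [key w] at h1
      have h2 : ((c - c' : ℤ) : 𝓞 K) + ((e + c * w : ℤ) : 𝓞 K) * (ζ - 1) ∈ π ^ 2 := by
        rw [← Ideal.Quotient.eq_zero_iff_mem, ← hmk_def, map_add, map_mul, map_intCast,
          map_intCast]
        push_cast
        push_cast at h1
        linear_combination h1
      have h3 : ((c - c' : ℤ) : 𝓞 K) ∈ π := by
        have hterm : ((e + c * w : ℤ) : 𝓞 K) * (ζ - 1) ∈ π := Ideal.mul_mem_left _ _ hmem
        have h4 := Ideal.sub_mem π (Ideal.pow_le_self two_ne_zero h2) hterm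
        simpa using h4
      have h4 : (p : ℤ) ∣ (c - c') := (hint _).mp h3
      have h5 : ((c - c' : ℤ) : 𝓞 K) ∈ π ^ 2 := by
        obtain ⟨k, hk⟩ := h4
        rw [hk]
        push_cast
        exact Ideal.mul_mem_right _ _ (by exact_mod_cast hplem : (p : 𝓞 K) ∈ π ^ 2)
      have h6 : ((e + c * w : ℤ) : 𝓞 K) * (ζ - 1) ∈ π ^ 2 := by
        have h7 := Ideal.sub_mem _ h2 h5
        simpa using h7
      exact (hF4 _).mp h6
    · intro hdvd
      refine ⟨c, hpc, ?_⟩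
      have hz : ((e + c * w : ℤ) : (𝓞 K) ⧸ (π ^ 2)) * mk (ζ - 1) = 0 := by
        rw [← map_intCast mk, ← map_mul]
        exact Ideal.Quotient.eq_zero_iff_mem.mpr ((hF4 _).mpr hdvd)
      have h0 : mk (α ^ (p - 1) * ζ ^ w - (c : 𝓞 K)) = 0 := by
        rw [map_sub, map_intCast, key w, hz]
        ring
      rw [hmk_def] at h0
      exact Ideal.Quotient.eq_zero_iff_mem.mp h0
  -- conclusion
  have hcz : ((c : ZMod p)) ≠ 0 := by
    rw [Ne, ZMod.intCast_zmod_eq_zero_iff_dvd]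
    exact hpc
  set z : ZMod p := -(e : ZMod p) * (c : ZMod p)⁻¹ with hz_def
  refine ⟨⟨z.val, z.val_lt⟩, (cond _).mpr ?_, ?_⟩
  · apply (ZMod.intCast_zmod_eq_zero_iff_dvd _ p).mp
    push_cast
    rw [ZMod.natCast_rightInverse z, hz_def]
    field_simp
    ring
  · intro w' hw'
    have hdvd' := (cond _).mp hw'
    have hdvd₀ : (p : ℤ) ∣ (e + c * ((⟨z.val, z.val_lt⟩ : Fin p) : ℕ)) := by
      apply (ZMod.intCast_zmod_eq_zero_iff_dvd _ p).mp
      push_cast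
      rw [ZMod.natCast_rightInverse z, hz_def]
      field_simp
      ring
    have h1 : ((e + c * (w' : ℕ) : ℤ) : ZMod p) = 0 :=
      (ZMod.intCast_zmod_eq_zero_iff_dvd _ p).mpr hdvd'
    have h2 : ((e + c * ((⟨z.val, z.val_lt⟩ : Fin p) : ℕ) : ℤ) : ZMod p) = 0 :=
      (ZMod.intCast_zmod_eq_zero_iff_dvd _ p).mpr hdvd₀
    push_cast at h1 h2
    have h4 : (c : ZMod p) * (((w' : ℕ) : ZMod p)) =
        (c : ZMod p) * ((((⟨z.val, z.val_lt⟩ : Fin p) : ℕ)) : ZMod p) := by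
      linear_combination h1 - h2
    have h3 := mul_left_cancel₀ hcz h4
    have h5 : (w' : ℕ) = ((⟨z.val, z.val_lt⟩ : Fin p) : ℕ) := by
      have h6 := congrArg ZMod.val h3
      rwa [ZMod.val_cast_of_lt w'.isLt, ZMod.val_cast_of_lt (Fin.isLt _)] at h6
    exact Fin.ext h5
end

section
/- Let p be an odd prime, K = ℚ(ζ), S = K(ω) a cyclic degree-p Kummer extension of K, θ: ω ↦ ωζ the generator of Gal(S/K), and π₀ a prime ideal of O_S above the prime π = (ζ-1)O_K such that π₀² divides ω - 1 and π_n := θ^n(π₀) exactly divides ω - 1 (exactly to the first power) for n = 1,...,p-1. Let σ_μ ∈ Gal(S/ℚ) restrict to ζ ↦ ζ^v on K and satisfy σ_μ(ω) ≡ ω^μ (mod π²) with μ coprime to p. Then σ_μ(π₀) = π₀. -/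
open NumberField

theorem stmt12 (p : ℕ) (hp : p.Prime) (hodd : Odd p)
    (S : Type*) [Field S] [NumberField S]
    (ζ ω : 𝓞 S) (hζ : IsPrimitiveRoot ζ p)
    (θ σ : 𝓞 S ≃+* 𝓞 S)
    (hθζ : θ ζ = ζ) (hθω : θ ω = ω * ζ)
    (v μ : ℕ) (hv : orderOf (v : ZMod p) = p - 1) (hμ : ¬ p ∣ μ)
    (hσζ : σ ζ = ζ ^ v)
    (π₀ : Ideal (𝓞 S)) (hπ₀ : π₀.IsPrime) (hπ₀p : ζ - 1 ∈ π₀)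
    (πn : ℕ → Ideal (𝓞 S))
    (hπn : ∀ n, πn n = Ideal.map ((θ ^ n : 𝓞 S ≃+* 𝓞 S) : 𝓞 S →+* 𝓞 S) π₀)
    (hsplit : (Ideal.span {ζ - 1} : Ideal (𝓞 S)) = ∏ n ∈ Finset.range p, πn n)
    (hω0 : ω - 1 ∈ π₀ ^ 2)
    (hωn : ∀ n, 1 ≤ n → n ≤ p - 1 → ω - 1 ∈ πn n ∧ ω - 1 ∉ (πn n) ^ 2)
    (hσω : σ ω - ω ^ μ ∈ (Ideal.span {ζ - 1} : Ideal (𝓞 S)) ^ 2) :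
    Ideal.map (σ : 𝓞 S →+* 𝓞 S) π₀ = π₀ := by
  have hp1 : 1 < p := hp.one_lt
  have hζ1 : ζ ≠ 1 := hζ.ne_one hp1
  have hz0 : ζ - 1 ≠ 0 := sub_ne_zero.mpr hζ1
  -- ζ - 1 divides p
  have hdvd_p : (ζ - 1) ∣ (p : 𝓞 S) := by
    have hs : ∑ i ∈ Finset.range p, ζ ^ i = 0 := hζ.geom_sum_eq_zero hp1
    have hdvd : (ζ - 1) ∣ ∑ i ∈ Finset.range p, (ζ ^ i - 1) := by
      refine Finset.dvd_sum fun i _ => ⟨∑ j ∈ Finset.range i, ζ ^ j, ?_⟩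
      rw [← geom_sum_mul]; ring
    have heq : ∑ i ∈ Finset.range p, (ζ ^ i - 1) = -(p : 𝓞 S) := by
      rw [Finset.sum_sub_distrib, hs]; simp
    rw [heq] at hdvd
    exact (dvd_neg).mp hdvd
  -- ζ - 1 divides ζ^k - 1 for any k
  have hdvd_pow : ∀ k : ℕ, (ζ - 1) ∣ (ζ ^ k - 1) := fun k =>
    ⟨∑ j ∈ Finset.range k, ζ ^ j, by rw [← geom_sum_mul]; ring⟩
  set J : Ideal (𝓞 S) := Ideal.map (σ : 𝓞 S →+* 𝓞 S) π₀ with hJ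
  have hJprime : J.IsPrime := Ideal.map_isPrime_of_equiv σ (I := π₀)
  -- ζ - 1 ∈ J
  have hζJ : ζ - 1 ∈ J := by
    have h1 : σ (ζ - 1) ∈ J := Ideal.mem_map_of_mem _ hπ₀p
    have h2 : ζ ^ v - 1 ∈ J := by rwa [map_sub, map_one, hσζ] at h1
    -- find w with v*w % p = 1
    have hvp : ¬ p ∣ v := by
      intro h
      have hv0 : (v : ZMod p) = 0 := by
        exact_mod_cast (ZMod.natCast_eq_zero_iff v p).mpr h
      haveI : Fact (1 < p) := ⟨hp1⟩
      have h01 := pow_orderOf_eq_one (0 : ZMod p)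
      rw [hv0] at hv
      rw [hv, zero_pow (by omega : p - 1 ≠ 0)] at h01
      exact zero_ne_one h01
    have hcop : Nat.Coprime v p := (Nat.coprime_comm.mp (hp.coprime_iff_not_dvd.mpr hvp))
    obtain ⟨w, -, hw⟩ := Nat.exists_mul_mod_eq_one_of_coprime hcop hp1
    have hzeta : (ζ ^ v) ^ w = ζ := by
      have hq : v * w = p * (v * w / p) + 1 := by
        conv_lhs => rw [← Nat.div_add_mod (v * w) p, hw]
      rw [← pow_mul, hq, pow_add, pow_mul, hζ.pow_eq_one, one_pow, one_mul, pow_one]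
    have : ζ - 1 = (∑ j ∈ Finset.range w, (ζ ^ v) ^ j) * (ζ ^ v - 1) := by
      rw [geom_sum_mul, hzeta]
    rw [this]
    exact Ideal.mul_mem_left _ _ h2
  -- the product of the πn is contained in J, so some πn ≤ J
  have hprodJ : ∏ n ∈ Finset.range p, πn n ≤ J := by
    rw [← hsplit]
    exact (Ideal.span_le).mpr (by simpa using hζJ)
  obtain ⟨n, hnmem, hnle⟩ := (hJprime.prod_le).mp hprodJ
  -- each πn contains ζ - 1 and is maximal
  have hπ₀bot : π₀ ≠ ⊥ := fun h => hz0 (by simpa [h] using hπ₀p)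
  have hπ₀max : π₀.IsMaximal := hπ₀.isMaximal hπ₀bot
  have hπnmax : (πn n).IsMaximal := by
    rw [hπn n]; exact Ideal.map_isMaximal_of_equiv _ (hp := hπ₀max)
  have hπneq : πn n = J := hπnmax.eq_of_le hJprime.ne_top hnle
  -- case n = 0
  rcases Nat.eq_zero_or_pos n with hn0 | hn1
  · rw [← hπneq, hn0, hπn 0]
    have h1 : ((θ ^ 0 : 𝓞 S ≃+* 𝓞 S) : 𝓞 S →+* 𝓞 S) = RingHom.id _ := rfl
    rw [h1, Ideal.map_id]
  -- case n ≥ 1 : contradiction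
  exfalso
  have hnp : n ≤ p - 1 := by
    have := Finset.mem_range.mp hnmem; omega
  obtain ⟨hω1, hω2⟩ := hωn n hn1 hnp
  set P := πn n with hP
  have hζP : ζ - 1 ∈ P := by
    rw [hπneq]; exact hζJ
  -- σ ω - 1 ∈ P ^ 2
  have h1 : σ ω - 1 ∈ P ^ 2 := by
    rw [hπneq, hJ, ← Ideal.map_pow]
    have := Ideal.mem_map_of_mem (σ : 𝓞 S →+* 𝓞 S) hω0
    rwa [map_sub, map_one] at this
  -- ω ^ μ - 1 ∈ P ^ 2
  have hspanP : (Ideal.span {ζ - 1} : Ideal (𝓞 S)) ≤ P :=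
    (Ideal.span_le).mpr (by simpa using hζP)
  have h2 : σ ω - ω ^ μ ∈ P ^ 2 := Ideal.pow_right_mono hspanP 2 hσω
  have h3 : ω ^ μ - 1 ∈ P ^ 2 := by
    have h4 := (P ^ 2).sub_mem h1 h2
    have heq : (σ ω - 1) - (σ ω - ω ^ μ) = ω ^ μ - 1 := by ring
    rwa [heq] at h4
  -- factor ω ^ μ - 1
  have hfac : ω ^ μ - 1 = (∑ j ∈ Finset.range μ, ω ^ j) * (ω - 1) := geom_sum_mul ω μ |>.symm
  -- the geometric sum is in P
  have hPmax : P.IsMaximal := hπnmax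
  have hgP : (∑ j ∈ Finset.range μ, ω ^ j) ∈ P := by
    by_contra hg
    obtain ⟨y, i, hi, hyi⟩ := hPmax.exists_inv hg
    -- ω - 1 = (ω-1)*y*g + (ω-1)*i ∈ P^2
    have : ω - 1 ∈ P ^ 2 := by
      have heq : ω - 1 = y * (ω ^ μ - 1) + (ω - 1) * i := by
        rw [hfac]; linear_combination (1 - ω) * hyi
      rw [heq]
      refine Ideal.add_mem _ (Ideal.mul_mem_left _ _ h3) ?_
      rw [sq]
      exact Ideal.mul_mem_mul hω1 hi
    exact hω2 this
  -- μ ∈ P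
  have hμP : (μ : 𝓞 S) ∈ P := by
    have hdiff : (μ : 𝓞 S) - (∑ j ∈ Finset.range μ, ω ^ j) ∈ P := by
      have : (μ : 𝓞 S) - (∑ j ∈ Finset.range μ, ω ^ j) = ∑ j ∈ Finset.range μ, (1 - ω ^ j) := by
        rw [Finset.sum_sub_distrib]; simp
      rw [this]
      refine Ideal.sum_mem _ fun j _ => ?_
      have : (1 : 𝓞 S) - ω ^ j = -((∑ k ∈ Finset.range j, ω ^ k) * (ω - 1)) := by
        rw [geom_sum_mul]; ring
      rw [this]
      exact P.neg_mem (Ideal.mul_mem_left _ _ hω1)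
    have := P.add_mem hdiff hgP
    simpa using this
  -- p ∈ P
  have hpP : (p : 𝓞 S) ∈ P := by
    obtain ⟨c, hc⟩ := hdvd_p
    rw [hc]
    exact Ideal.mul_mem_right _ _ hζP
  -- contradiction via Bezout
  have hcop : Nat.Coprime p μ := hp.coprime_iff_not_dvd.mpr hμ
  have hbez : (1 : ℤ) = p * Nat.gcdA p μ + μ * Nat.gcdB p μ := by
    have := Nat.gcd_eq_gcd_ab p μ
    rwa [hcop] at this
  have h1P : (1 : 𝓞 S) ∈ P := by
    have : ((1 : ℤ) : 𝓞 S) ∈ P := by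
      rw [hbez]
      push_cast
      refine P.add_mem (Ideal.mul_mem_right _ _ hpP) (Ideal.mul_mem_right _ _ hμP)
    simpa using this
  exact hPmax.ne_top ((Ideal.eq_top_iff_one P).mpr h1P)
end

section
/- In the setting of a singular primary K-extension: let p be an odd prime, S/K cyclic of degree p generated by θ: ω ↦ ωζ, with primes π_n = θ^n(π₀) above π satisfying π₀² | ω - 1 and π_n ∥ ω - 1 for n ≥ 1. Let σ_μ extend σ: ζ ↦ ζ^v with σ_μ(ω) ≡ ω^μ (mod π²). Then for each k with 1 ≤ k ≤ p-1, σ_μ(π_k) = π_{n_k} where n_k ≡ k·v·μ^{-1} (mod p). -/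
open NumberField

theorem stmt13 (p : ℕ) (hp : p.Prime) (hodd : Odd p)
    (S : Type*) [Field S] [NumberField S]
    (ζ ω : 𝓞 S) (hζ : IsPrimitiveRoot ζ p)
    (θ σ : 𝓞 S ≃+* 𝓞 S)
    (hθζ : θ ζ = ζ) (hθω : θ ω = ω * ζ)
    (v μ : ℕ) (hv : orderOf (v : ZMod p) = p - 1) (hμ : ¬ p ∣ μ)
    (hvμ : (v : ZMod p) ≠ (μ : ZMod p))
    (hσζ : σ ζ = ζ ^ v)
    (π₀ : Ideal (𝓞 S)) (hπ₀ : π₀.IsPrime) (hπ₀p : ζ - 1 ∈ π₀)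
    (πn : ℕ → Ideal (𝓞 S))
    (hπn : ∀ n, πn n = Ideal.map ((θ ^ n : 𝓞 S ≃+* 𝓞 S) : 𝓞 S →+* 𝓞 S) π₀)
    (hsplit : (Ideal.span {ζ - 1} : Ideal (𝓞 S)) = ∏ n ∈ Finset.range p, πn n)
    (hω0 : ω - 1 ∈ π₀ ^ 2)
    (hωn : ∀ n, 1 ≤ n → n ≤ p - 1 → ω - 1 ∈ πn n ∧ ω - 1 ∉ (πn n) ^ 2)
    (hσω : σ ω - ω ^ μ ∈ (Ideal.span {ζ - 1} : Ideal (𝓞 S)) ^ 2) :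
    ∀ k, 1 ≤ k → k ≤ p - 1 → ∃ n, n < p ∧
      Ideal.map (σ : 𝓞 S →+* 𝓞 S) (πn k) = πn n ∧
      (n : ZMod p) = (k : ZMod p) * v * (μ : ZMod p)⁻¹ := by
  intro k hk1 hk2
  haveI : Fact p.Prime := ⟨hp⟩
  have hp2 : 2 ≤ p := hp.two_le
  have hp3 : 3 ≤ p := by
    have hne2 : p ≠ 2 := by rintro rfl; exact (by decide : ¬ Odd 2) hodd
    omega
  have hζp : ζ ^ p = 1 := hζ.pow_eq_one
  have hζ1 : ζ ≠ 1 := hζ.ne_one (by omega)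
  have hζu : IsUnit ζ := by
    refine IsUnit.of_mul_eq_one (a := ζ) (ζ ^ (p - 1)) ?_
    rw [← pow_succ']
    rw [Nat.sub_add_cancel (by omega)]
    exact hζp
  -- powers of ζ depend only on exponent mod p
  have hpowmod : ∀ a : ℕ, ζ ^ a = ζ ^ (a % p) := by
    intro a
    conv_lhs => rw [← Nat.div_add_mod a p]
    rw [pow_add, pow_mul, hζp, one_pow, one_mul]
  -- span of ζ^a - 1 equals span of ζ - 1 when p ∤ a
  have hspan : ∀ a : ℕ, ¬ p ∣ a →
      (Ideal.span {ζ ^ a - 1} : Ideal (𝓞 S)) = Ideal.span {ζ - 1} := by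
    intro a ha
    have h1 : ζ - 1 ∣ ζ ^ a - 1 := by
      simpa using sub_dvd_pow_sub_pow ζ 1 a
    have hav : (a : ZMod p) ≠ 0 := fun h => ha ((ZMod.natCast_eq_zero_iff a p).1 h)
    set b := ((a : ZMod p)⁻¹).val with hb
    have hab : ((a * b : ℕ) : ZMod p) = ((1 : ℕ) : ZMod p) := by
      push_cast
      rw [hb, ZMod.natCast_val, ZMod.cast_id]
      exact mul_inv_cancel₀ hav
    have hmod : (a * b) % p = 1 % p := by
      rwa [ZMod.natCast_eq_natCast_iff'] at hab
    have h2 : ζ ^ a - 1 ∣ ζ - 1 := by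
      have hz : (ζ ^ a) ^ b = ζ := by
        rw [← pow_mul, hpowmod, hmod, ← hpowmod, pow_one]
      calc ζ ^ a - 1 ∣ (ζ ^ a) ^ b - 1 := by
            simpa using sub_dvd_pow_sub_pow (ζ ^ a) 1 b
        _ = ζ - 1 := by rw [hz]
    exact le_antisymm (Ideal.span_singleton_le_span_singleton.mpr h1)
      (Ideal.span_singleton_le_span_singleton.mpr h2)
  -- action of θ^n
  have hθn : ∀ n : ℕ, (θ ^ n : 𝓞 S ≃+* 𝓞 S) ζ = ζ ∧
      (θ ^ n : 𝓞 S ≃+* 𝓞 S) ω = ω * ζ ^ n := by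
    intro n
    induction n with
    | zero =>
      refine ⟨rfl, ?_⟩
      show (θ ^ 0 : 𝓞 S ≃+* 𝓞 S) ω = ω * ζ ^ 0
      rw [pow_zero ζ, mul_one, pow_zero]
      rfl
    | succ m ih =>
      have h1 : (θ ^ (m + 1) : 𝓞 S ≃+* 𝓞 S) = θ * (θ ^ m : 𝓞 S ≃+* 𝓞 S) := by
        rw [pow_succ']
      constructor
      · rw [h1]; show θ ((θ ^ m : 𝓞 S ≃+* 𝓞 S) ζ) = ζ
        rw [ih.1, hθζ]
      · rw [h1]; show θ ((θ ^ m : 𝓞 S ≃+* 𝓞 S) ω) = ω * ζ ^ (m + 1)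
        rw [ih.2, map_mul, hθω, map_pow, hθζ, pow_succ]; ring
  set q : Ideal (𝓞 S) := Ideal.span {ζ - 1} with hq
  have hζ1ne : ζ - 1 ≠ 0 := sub_ne_zero.mpr hζ1
  -- primes πn
  have hπprime : ∀ n, (πn n).IsPrime := by
    intro n
    rw [hπn]
    exact Ideal.map_isPrime_of_equiv _
  have hπmem : ∀ n, ζ - 1 ∈ πn n := by
    intro n
    rw [hπn]
    have := Ideal.mem_map_of_mem ((θ ^ n : 𝓞 S ≃+* 𝓞 S) : 𝓞 S →+* 𝓞 S) hπ₀p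
    simpa [map_sub, (hθn n).1] using this
  have hπbot : ∀ n, πn n ≠ ⊥ := by
    intro n h
    exact hζ1ne (by simpa [h] using hπmem n)
  have hπmax : ∀ n, (πn n).IsMaximal := fun n =>
    Ideal.IsPrime.isMaximal (hπprime n) (hπbot n)
  have hqle : ∀ n, n < p → q ≤ πn n := by
    intro n hn
    rw [hsplit]
    exact le_trans Ideal.prod_le_inf (Finset.inf_le (Finset.mem_range.mpr hn))
  have hklt : k < p := by omega
  -- σ fixes q
  have hv0 : ¬ p ∣ v := by
    intro h
    have : (v : ZMod p) = 0 := (ZMod.natCast_eq_zero_iff v p).2 h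
    rw [this] at hv
    have h1 : (0 : ZMod p) ^ (p - 1) = 1 := hv ▸ pow_orderOf_eq_one (0 : ZMod p)
    rw [zero_pow (by omega)] at h1
    exact zero_ne_one h1
  have hσq : Ideal.map (σ : 𝓞 S →+* 𝓞 S) q = q := by
    rw [hq, Ideal.map_span, Set.image_singleton]
    rw [show ((σ : 𝓞 S →+* 𝓞 S) (ζ - 1)) = ζ ^ v - 1 by simp [hσζ]]
    exact hspan v hv0
  -- σ(πk) is one of the πn
  haveI := hπprime k
  have hσπ_prime : (Ideal.map (σ : 𝓞 S →+* 𝓞 S) (πn k)).IsPrime :=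
    Ideal.map_isPrime_of_equiv _
  have hqlek : q ≤ Ideal.map (σ : 𝓞 S →+* 𝓞 S) (πn k) := by
    conv_lhs => rw [← hσq]
    exact Ideal.map_mono (hqle k hklt)
  obtain ⟨N, hNmem, hNle⟩ := (hσπ_prime.prod_le).1 (by rw [← hsplit]; exact hqlek)
  have hNlt : N < p := Finset.mem_range.mp hNmem
  have hNeq : πn N = Ideal.map (σ : 𝓞 S →+* 𝓞 S) (πn k) :=
    (hπmax N).eq_of_le hσπ_prime.ne_top hNle
  refine ⟨N, hNlt, hNeq.symm, ?_⟩
  -- Now the congruence. Key membership facts at πN^2.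
  -- (F1) ω ζ^m - 1 ∈ (πn m)^2 for all m
  have hF1 : ∀ m : ℕ, ω * ζ ^ m - 1 ∈ (πn m) ^ 2 := by
    intro m
    rw [hπn, ← Ideal.map_pow]
    have := Ideal.mem_map_of_mem ((θ ^ m : 𝓞 S ≃+* 𝓞 S) : 𝓞 S →+* 𝓞 S) hω0
    simpa [map_sub, (hθn m).2] using this
  -- (F2) σ(ω ζ^k - 1) ∈ πN^2
  have hmapσ : Ideal.map (σ : 𝓞 S →+* 𝓞 S) ((πn k) ^ 2) = (πn N) ^ 2 := by
    rw [Ideal.map_pow, ← hNeq]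
  have hF2 : σ ω * ζ ^ (k * v) - 1 ∈ (πn N) ^ 2 := by
    have h := Ideal.mem_map_of_mem ((σ : 𝓞 S →+* 𝓞 S)) (hF1 k)
    rw [hmapσ] at h
    have hσz : σ (ζ ^ k) = ζ ^ (k * v) := by
      rw [map_pow, hσζ, ← pow_mul, Nat.mul_comm]
    simpa [map_sub, map_mul, hσz] using h
  have hq2le : q ^ 2 ≤ (πn N) ^ 2 := Ideal.pow_right_mono (hqle N hNlt) 2
  -- (F3) ω^μ ζ^(k v) - 1 ∈ πN^2
  have hF3 : ω ^ μ * ζ ^ (k * v) - 1 ∈ (πn N) ^ 2 := by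
    have h1 : (σ ω - ω ^ μ) * ζ ^ (k * v) ∈ (πn N) ^ 2 :=
      hq2le (Ideal.mul_mem_right _ _ hσω)
    have : ω ^ μ * ζ ^ (k * v) - 1
        = (σ ω * ζ ^ (k * v) - 1) - (σ ω - ω ^ μ) * ζ ^ (k * v) := by ring
    rw [this]
    exact Ideal.sub_mem _ hF2 h1
  -- (F5) ω^μ ζ^(N μ) - 1 ∈ πN^2
  have hF5 : ω ^ μ * ζ ^ (N * μ) - 1 ∈ (πn N) ^ 2 := by
    have hdvd : ω * ζ ^ N - 1 ∣ (ω * ζ ^ N) ^ μ - 1 := by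
      simpa using sub_dvd_pow_sub_pow (ω * ζ ^ N) 1 μ
    obtain ⟨c, hc⟩ := hdvd
    have : (ω * ζ ^ N) ^ μ - 1 ∈ (πn N) ^ 2 := hc ▸ Ideal.mul_mem_right _ _ (hF1 N)
    have heq : (ω * ζ ^ N) ^ μ = ω ^ μ * ζ ^ (N * μ) := by
      rw [mul_pow, ← pow_mul]
    rwa [heq] at this
  -- (F6,F7) ζ^(k v) - ζ^(N μ) ∈ πN^2
  have hpowle : (πn N) ^ 2 ≤ πn N := Ideal.pow_le_self two_ne_zero
  have hωnotmem : ω ∉ πn N := by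
    intro h
    have h1 : ω * ζ ^ N - 1 ∈ πn N := hpowle (hF1 N)
    have h2 : ω * ζ ^ N ∈ πn N := Ideal.mul_mem_right _ _ h
    have h3 : (1 : 𝓞 S) ∈ πn N := by
      have := Ideal.sub_mem _ h2 h1
      simpa using this
    exact (hπprime N).ne_top (Ideal.eq_top_of_isUnit_mem _ h3 isUnit_one)
  have hωμ : ω ^ μ ∉ πn N := fun h => hωnotmem ((hπprime N).mem_of_pow_mem μ h)
  have hF7 : ζ ^ (k * v) - ζ ^ (N * μ) ∈ (πn N) ^ 2 := by
    have h : ω ^ μ * (ζ ^ (k * v) - ζ ^ (N * μ)) ∈ (πn N) ^ 2 := by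
      have heq : ω ^ μ * (ζ ^ (k * v) - ζ ^ (N * μ))
          = (ω ^ μ * ζ ^ (k * v) - 1) - (ω ^ μ * ζ ^ (N * μ) - 1) := by ring
      rw [heq]
      exact Ideal.sub_mem _ hF3 hF5
    rcases Ideal.IsPrime.mul_mem_pow _ h with h1 | h1
    · exact absurd h1 hωμ
    · exact h1
  -- (F8,F9) ζ^c - 1 ∈ πN^2 where c ≡ k v - N μ (mod p)
  set c : ℕ := (k * v + (p - 1) * (N * μ)) % p with hc
  have hclt : c < p := Nat.mod_lt _ (by omega)
  have hkey : (N * μ + c) % p = (k * v) % p := by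
    have h2 : c ≡ k * v + (p - 1) * (N * μ) [MOD p] := Nat.mod_modEq _ p
    have h3 : N * μ + c ≡ N * μ + (k * v + (p - 1) * (N * μ)) [MOD p] :=
      Nat.ModEq.add_left _ h2
    have h5 : (p - 1) * (N * μ) = p * (N * μ) - N * μ := by rw [Nat.sub_one_mul]
    have h6 : N * μ ≤ p * (N * μ) := Nat.le_mul_of_pos_left _ (by omega)
    have h4 : N * μ + (k * v + (p - 1) * (N * μ)) = k * v + p * (N * μ) := by omega
    have h7 := h3
    rw [h4] at h7
    rw [h7, Nat.add_mul_mod_self_left]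
  have hzc : ζ ^ (N * μ) * ζ ^ c = ζ ^ (k * v) := by
    rw [← pow_add, hpowmod (N * μ + c), hpowmod (k * v), hkey]
  have hF9 : ζ ^ c - 1 ∈ (πn N) ^ 2 := by
    have h : ζ ^ (N * μ) * (ζ ^ c - 1) ∈ (πn N) ^ 2 := by
      rw [mul_sub, hzc, mul_one]
      exact hF7
    rcases Ideal.IsPrime.mul_mem_pow _ h with h1 | h1
    · exact absurd (Ideal.eq_top_of_isUnit_mem _ h1 (hζu.pow _)) (hπprime N).ne_top
    · exact h1
  -- the multiplicity of πN in q is one:  q ⊄ πN^2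
  have hπ0eq : πn 0 = π₀ := by
    rw [hπn]
    have : ((θ ^ 0 : 𝓞 S ≃+* 𝓞 S) : 𝓞 S →+* 𝓞 S) = RingHom.id (𝓞 S) := by
      rw [pow_zero]
      rfl
    rw [this, Ideal.map_id]
  have hmult : ¬ q ≤ (πn N) ^ 2 := by
    rcases Nat.eq_zero_or_pos N with hN0 | hN1
    · -- N = 0 : use cancellation in the Dedekind domain
      subst hN0
      intro hle
      have hdvd : (πn 0) ^ 2 ∣ q := Ideal.dvd_iff_le.mpr hle
      have hqprod : q = πn 0 * ∏ m ∈ (Finset.range p).erase 0, πn m := by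
        rw [hsplit]
        exact (Finset.mul_prod_erase _ _ (Finset.mem_range.mpr (by omega))).symm
      rw [hqprod, sq] at hdvd
      have hne0 : πn 0 ≠ 0 := by
        rw [Ideal.zero_eq_bot]; exact hπbot 0
      have hdvd2 : πn 0 ∣ ∏ m ∈ (Finset.range p).erase 0, πn m :=
        (mul_dvd_mul_iff_left hne0).mp hdvd
      have hle2 : ∏ m ∈ (Finset.range p).erase 0, πn m ≤ πn 0 := Ideal.le_of_dvd hdvd2
      obtain ⟨m, hmmem, hmle⟩ := ((hπprime 0).prod_le).1 hle2
      have hm0 : m ≠ 0 := (Finset.mem_erase.mp hmmem).1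
      have hmp : m < p := Finset.mem_range.mp (Finset.mem_erase.mp hmmem).2
      have hmeq : πn m = πn 0 := (hπmax m).eq_of_le (hπprime 0).ne_top hmle
      have := (hωn m (by omega) (by omega)).2
      rw [hmeq, hπ0eq] at this
      exact this hω0
    · -- N ≥ 1 : ω - 1 ∉ πN^2
      intro hle
      have hpN : ¬ p ∣ N := Nat.not_dvd_of_pos_of_lt hN1 hNlt
      have hzN : ζ ^ N - 1 ∈ (πn N) ^ 2 := by
        have : (Ideal.span {ζ ^ N - 1} : Ideal (𝓞 S)) ≤ (πn N) ^ 2 := by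
          rw [hspan N hpN]; exact hle
        exact this (Ideal.subset_span rfl)
      have h1 : ω * (ζ ^ N - 1) ∈ (πn N) ^ 2 := Ideal.mul_mem_left _ _ hzN
      have h2 : ω - 1 ∈ (πn N) ^ 2 := by
        have heq : ω - 1 = (ω * ζ ^ N - 1) - ω * (ζ ^ N - 1) := by ring
        rw [heq]
        exact Ideal.sub_mem _ (hF1 N) h1
      exact (hωn N hN1 (by omega)).2 h2
  -- hence c = 0
  have hc0 : c = 0 := by
    by_contra h
    have hpc : ¬ p ∣ c := Nat.not_dvd_of_pos_of_lt (Nat.pos_of_ne_zero h) hclt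
    apply hmult
    rw [← hspan c hpc]
    exact (Ideal.span_singleton_le_iff_mem _).mpr hF9
  -- conclude the congruence
  have hdvd : p ∣ k * v + (p - 1) * (N * μ) := Nat.dvd_of_mod_eq_zero (hc.symm.trans hc0)
  have hzmod : ((k * v + (p - 1) * (N * μ) : ℕ) : ZMod p) = 0 :=
    (ZMod.natCast_eq_zero_iff _ p).2 hdvd
  have hcast : ((p - 1 : ℕ) : ZMod p) = -1 := by
    rw [Nat.cast_sub (by omega), ZMod.natCast_self, Nat.cast_one, zero_sub]
  push_cast [hcast] at hzmod
  have hkvNμ : (k : ZMod p) * v = (N : ZMod p) * μ := by linear_combination hzmod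
  have hμ0 : (μ : ZMod p) ≠ 0 := fun h => hμ ((ZMod.natCast_eq_zero_iff μ p).1 h)
  field_simp
  linear_combination -hkvNμ
end
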